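/- Let q ≠ 0 and r be real numbers and let k be a nonnegative integer. For every real t, the series ∑_{n=0}^∞ W(n,k) t^n/n! converges and equals (e^{rt}/k!) · ((e^{qt} − 1)/q)^k. -/

import Mathlib

/-- The falling factorial `(x)_k = x(x-1)⋯(x-k+1)`. -/
noncomputable def fallFac (x : ℝ) (k : ℕ) : ℝ := ∏ i ∈ Finset.range k, (x - i)

open Finset

lemma fallFac_nat_cast (m j : ℕ) :
    fallFac (m : ℝ) j = (j.factorial : ℝ) * (m.choose j : ℝ) := by
  have h : fallFac (m : ℝ) j = (m.descFactorial j : ℝ) := by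
    rcases le_or_gt j m with h | h
    · rw [Nat.descFactorial_eq_prod_range, fallFac]
      push_cast [Nat.cast_prod]
      refine prod_congr rfl fun i hi => ?_
      rw [mem_range] at hi
      rw [Nat.cast_sub (le_trans (Nat.le_of_lt_succ (Nat.lt_succ_of_lt hi)) h)]
    · rw [Nat.descFactorial_eq_zero_iff_lt.mpr h, fallFac]
      rw [Nat.cast_zero]
      exact prod_eq_zero (mem_range.mpr h) (by simp)
  rw [h, Nat.descFactorial_eq_factorial_mul_choose]
  push_cast
  ring

/-- Alternating sum of binomial coefficients. -/
lemma alt_sum_choose (m : ℕ) :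
    ∑ d ∈ range (m + 1), (-1 : ℝ) ^ (m - d) * (m.choose d : ℝ)
      = if m = 0 then 1 else 0 := by
  have h := add_pow (1 : ℝ) (-1) m
  simp only [one_pow, one_mul, add_neg_cancel] at h
  rcases Nat.eq_zero_or_pos m with hm | hm
  · subst hm; simp
  · rw [if_neg hm.ne', ← zero_pow hm.ne', h]

/-- Binomial inversion. -/
lemma binomial_inversion (f a : ℕ → ℝ)
    (h : ∀ m, f m = ∑ j ∈ range (m + 1), (m.choose j : ℝ) * a j) (k : ℕ) :
    ∑ j ∈ range (k + 1), (-1 : ℝ) ^ (k - j) * (k.choose j : ℝ) * f j = a k := by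
  calc ∑ j ∈ range (k + 1), (-1 : ℝ) ^ (k - j) * (k.choose j : ℝ) * f j
      = ∑ j ∈ range (k + 1), ∑ i ∈ range (k + 1),
          (-1 : ℝ) ^ (k - j) * (k.choose j : ℝ) * ((j.choose i : ℝ) * a i) := by
        refine sum_congr rfl fun j hj => ?_
        rw [mem_range] at hj
        rw [h j, mul_sum]
        refine sum_subset (range_subset_range.mpr (by omega)) fun x _ hx => ?_
        rw [mem_range, not_lt] at hx
        rw [Nat.choose_eq_zero_of_lt (show j < x by omega)]
        simp
    _ = ∑ i ∈ range (k + 1), a i *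
          (∑ j ∈ range (k + 1), (-1 : ℝ) ^ (k - j) * (k.choose j : ℝ) * (j.choose i : ℝ)) := by
        rw [sum_comm]
        refine sum_congr rfl fun i _ => ?_
        rw [mul_sum]
        refine sum_congr rfl fun j _ => by ring
    _ = ∑ i ∈ range (k + 1), a i * (if i = k then 1 else 0) := by
        refine sum_congr rfl fun i hi => ?_
        rw [mem_range, Nat.lt_succ_iff] at hi
        congr 1
        have hsub : ∑ j ∈ range (k + 1), (-1 : ℝ) ^ (k - j) * (k.choose j : ℝ) * (j.choose i : ℝ)
            = ∑ j ∈ Ico i (k + 1), (-1 : ℝ) ^ (k - j) * (k.choose j : ℝ) * (j.choose i : ℝ) := by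
          refine (sum_subset (fun x hx => by rw [mem_Ico] at hx; exact mem_range.mpr hx.2)
            fun x hx hx' => ?_).symm
          rw [mem_range] at hx; rw [mem_Ico, not_and_or, not_le, not_lt] at hx'
          rcases hx' with hx' | hx'
          · rw [Nat.choose_eq_zero_of_lt hx']; ring
          · omega
        rw [hsub]
        have hmul : ∀ j ∈ Ico i (k + 1),
            (-1 : ℝ) ^ (k - j) * (k.choose j : ℝ) * (j.choose i : ℝ)
            = (k.choose i : ℝ) * ((-1 : ℝ) ^ (k - j) * ((k - i).choose (j - i) : ℝ)) := by
          intro j hj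
          rw [mem_Ico] at hj
          have := Nat.choose_mul (n := k) hj.1
          have : (k.choose j : ℝ) * (j.choose i : ℝ) = (k.choose i : ℝ) * ((k - i).choose (j - i) : ℝ) := by
            exact_mod_cast congrArg (Nat.cast : ℕ → ℝ) this
          rw [mul_assoc, this]; ring
        rw [sum_congr rfl hmul, ← mul_sum]
        have hre : ∑ j ∈ Ico i (k + 1), (-1 : ℝ) ^ (k - j) * ((k - i).choose (j - i) : ℝ)
            = ∑ d ∈ range (k - i + 1), (-1 : ℝ) ^ ((k - i) - d) * ((k - i).choose d : ℝ) := by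
          rw [sum_Ico_eq_sum_range]
          have : k + 1 - i = k - i + 1 := by omega
          rw [this]
          refine sum_congr rfl fun d hd => ?_
          rw [mem_range] at hd
          have h1 : i + d - i = d := by omega
          have h2 : k - (i + d) = k - i - d := by omega
          rw [h1, h2]
        rw [hre, alt_sum_choose]
        rcases eq_or_ne i k with h' | h'
        · subst h'; simp
        · rw [if_neg h', if_neg (by omega), mul_zero]
    _ = a k := by
        rw [sum_congr rfl fun i _ => by rw [mul_ite, mul_one, mul_zero]]
        rw [sum_ite_eq' (range (k + 1)) k a]
        rw [if_pos (mem_range.mpr (Nat.lt_succ_self k))]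

/-- the exponential generating function of the `r`-Whitney numbers of the
second kind: for each `k`, `∑_{n≥0} W(n,k) t^n/n! = (e^{rt}/k!)((e^{qt} − 1)/q)^k`. -/
theorem whitneySecond_generating_function (q r : ℝ) (hq : q ≠ 0)
    (W : ℕ → ℕ → ℝ)
    (hW0 : ∀ n k, n < k → W n k = 0)
    (hW : ∀ n : ℕ, ∀ x : ℝ, (q * x + r) ^ n =
      ∑ k ∈ Finset.range (n + 1), q ^ k * W n k * fallFac x k)
    (k : ℕ) (t : ℝ) :
    HasSum (fun n : ℕ => W n k * t ^ n / (n.factorial : ℝ))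
      (Real.exp (r * t) / (k.factorial : ℝ) * ((Real.exp (q * t) - 1) / q) ^ k) := by
  -- explicit formula for W n k
  have key : ∀ n, q ^ k * (k.factorial : ℝ) * W n k
      = ∑ j ∈ range (k + 1), (-1 : ℝ) ^ (k - j) * (k.choose j : ℝ) * (q * j + r) ^ n := by
    intro n
    have hrec : ∀ m : ℕ, (q * m + r) ^ n
        = ∑ j ∈ range (m + 1), (m.choose j : ℝ) * (q ^ j * (j.factorial : ℝ) * W n j) := by
      intro m
      rw [hW n (m : ℝ)]
      have h1 : ∀ j, q ^ j * W n j * fallFac (m : ℝ) j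
          = (m.choose j : ℝ) * (q ^ j * (j.factorial : ℝ) * W n j) := by
        intro j
        rw [fallFac_nat_cast]; ring
      rw [sum_congr rfl fun j _ => h1 j]
      rcases le_or_gt m n with hmn | hmn
      · refine (sum_subset (range_subset_range.mpr (by omega)) fun x hx hx' => ?_).symm
        rw [mem_range, not_lt] at hx'
        rw [Nat.choose_eq_zero_of_lt (show m < x by omega)]; ring
      · refine sum_subset (range_subset_range.mpr (by omega)) fun x hx hx' => ?_
        rw [mem_range, not_lt] at hx'
        rw [hW0 n x (by omega)]; ring
    exact (binomial_inversion (fun m => (q * m + r) ^ n)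
      (fun j => q ^ j * (j.factorial : ℝ) * W n j) hrec k).symm
  -- constants
  set E := Real.exp (q * t) with hE
  have hqk : q ^ k * (k.factorial : ℝ) ≠ 0 :=
    mul_ne_zero (pow_ne_zero k hq) (Nat.cast_ne_zero.mpr k.factorial_ne_zero)
  have hWnk : ∀ n, W n k = (∑ j ∈ range (k + 1),
      (-1 : ℝ) ^ (k - j) * (k.choose j : ℝ) * (q * j + r) ^ n) / (q ^ k * (k.factorial : ℝ)) := by
    intro n
    rw [eq_div_iff hqk, ← key n]; ring
  -- termwise HasSum of exponentials
  have hterm : ∀ j : ℕ, HasSum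
      (fun n : ℕ => ((-1 : ℝ) ^ (k - j) * (k.choose j : ℝ) / (q ^ k * (k.factorial : ℝ)))
        * (((q * j + r) * t) ^ n / (n.factorial : ℝ)))
      (((-1 : ℝ) ^ (k - j) * (k.choose j : ℝ) / (q ^ k * (k.factorial : ℝ)))
        * Real.exp ((q * j + r) * t)) := by
    intro j
    have := NormedSpace.expSeries_div_hasSum_exp ((q * j + r) * t)
    rw [← Real.exp_eq_exp_ℝ] at this
    exact this.mul_left _
  have hsum := hasSum_sum (s := range (k + 1)) (fun j _ => hterm j)
  -- identify the function
  have hfun : (fun n : ℕ => ∑ j ∈ range (k + 1),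
      ((-1 : ℝ) ^ (k - j) * (k.choose j : ℝ) / (q ^ k * (k.factorial : ℝ)))
        * (((q * j + r) * t) ^ n / (n.factorial : ℝ)))
      = fun n : ℕ => W n k * t ^ n / (n.factorial : ℝ) := by
    funext n
    rw [hWnk n, div_mul_eq_mul_div, div_div, sum_mul, sum_div]
    refine sum_congr rfl fun j _ => ?_
    rw [mul_pow]
    have hfac : (n.factorial : ℝ) ≠ 0 := Nat.cast_ne_zero.mpr n.factorial_ne_zero
    field_simp
  -- identify the value
  have hval : ∑ j ∈ range (k + 1),
      ((-1 : ℝ) ^ (k - j) * (k.choose j : ℝ) / (q ^ k * (k.factorial : ℝ)))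
        * Real.exp ((q * j + r) * t)
      = Real.exp (r * t) / (k.factorial : ℝ) * ((E - 1) / q) ^ k := by
    have hexp : ∀ j : ℕ, Real.exp ((q * j + r) * t) = E ^ j * Real.exp (r * t) := by
      intro j
      rw [hE, ← Real.exp_nat_mul]
      rw [← Real.exp_add]
      congr 1
      ring
    rw [sum_congr rfl fun j _ => by rw [hexp j]]
    rw [div_pow, sub_pow, sum_div, mul_sum]
    refine sum_congr rfl fun j hj => ?_
    rw [mem_range, Nat.lt_succ_iff] at hj
    have hsign : (-1 : ℝ) ^ (k - j) = (-1 : ℝ) ^ (j + k) := by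
      have : j + k = (k - j) + 2 * j := by omega
      rw [this, pow_add, pow_mul]
      simp
    rw [hsign, one_pow]
    field_simp
  rw [hfun, hval] at hsum
  exact hsum
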